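/- For a positive integer t, let ℓ_t(x,y,z) = x² + xy + y² + 3t·z², L_t(x,y,z) = x² + xy + 7y² + 3t·z², M_t(x,y,z) = x² + 7y² + (3t+1)z² + 5yz + zx + xy, N_t(x,y,z) = 3x² + 3y² + (3t+1)z² + 3yz + 3xy, and K_t(x,y,z) = x² + xy + y² + 27t·z². Then for every positive integer t and every positive integer n: r(3n+1, ℓ_t) = 3·r(3n+1, L_t) = 3·r(3n+1, M_t) = 2·r(3n+1, N_t) + r(3n+1, K_t). -/

import Mathlib

open Matrix

noncomputable section

/-- A ternary quadratic form `a·x² + b·y² + c·z² + d·yz + e·zx + g·xy`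
with integer coefficients. -/
structure TernaryQF where
  a : ℤ
  b : ℤ
  c : ℤ
  d : ℤ
  e : ℤ
  g : ℤ
deriving DecidableEq

namespace TernaryQF

/-- Evaluation of the form in any commutative ring. -/
def evalR {R : Type*} [CommRing R] (f : TernaryQF) (x y z : R) : R :=
  (f.a : R) * x ^ 2 + (f.b : R) * y ^ 2 + (f.c : R) * z ^ 2 +
    (f.d : R) * (y * z) + (f.e : R) * (z * x) + (f.g : R) * (x * y)

def eval (f : TernaryQF) (x y z : ℤ) : ℤ := f.evalR x y z

def evalVec (f : TernaryQF) (v : Fin 3 → ℤ) : ℤ := f.eval (v 0) (v 1) (v 2)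

/-- Non-classic integral: the coefficients are coprime. -/
def NonClassic (f : TernaryQF) : Prop :=
  Nat.gcd f.a.natAbs (Nat.gcd f.b.natAbs (Nat.gcd f.c.natAbs
    (Nat.gcd f.d.natAbs (Nat.gcd f.e.natAbs f.g.natAbs)))) = 1

/-- Positive definiteness (equivalent, for a rational symmetric matrix, to
positivity of the Gram matrix). -/
def PosDefn (f : TernaryQF) : Prop :=
  ∀ x y z : ℤ, ¬(x = 0 ∧ y = 0 ∧ z = 0) → 0 < f.eval x y z

/-- `r n f`: the number of representations of `n` by `f`. -/
def r (f : TernaryQF) (n : ℤ) : ℕ :=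
  Set.ncard {v : Fin 3 → ℤ | f.evalVec v = n}

/-- `4·df`, four times the discriminant (determinant of the Gram matrix), an integer. -/
def disc4 (f : TernaryQF) : ℤ :=
  4 * f.a * f.b * f.c + f.g * f.d * f.e - f.a * f.d ^ 2 - f.b * f.e ^ 2 - f.c * f.g ^ 2

/-- `h_p(df, λ) = (p^{λ+1}-1)/(p-1) - (−4df/p)·(p^{λ}-1)/(p-1)`, written via geometric sums. -/
def hFactor (f : TernaryQF) (p lam : ℕ) : ℤ :=
  (∑ i ∈ Finset.range (lam + 1), (p : ℤ) ^ i) -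
    jacobiSym (-f.disc4) p * ∑ i ∈ Finset.range lam, (p : ℤ) ^ i

/-- A (positive definite non-classic integral) ternary form is strongly s-regular if it
represents a nonzero square and the representation numbers of squares satisfy the
multiplicative formula of Cooper–Lam type. -/
def StronglySRegular (f : TernaryQF) : Prop :=
  (∃ n : ℕ, 0 < n ∧ f.r ((n : ℤ) ^ 2) ≠ 0) ∧
    ∀ n₁ n₂ : ℕ, 0 < n₁ → 0 < n₂ →
      (∀ p : ℕ, p.Prime → p ∣ n₁ → p = 2 ∨ (p : ℤ) ∣ f.disc4) →
      Odd n₂ → IsCoprime (n₂ : ℤ) f.disc4 →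
      (f.r ((n₁ : ℤ) ^ 2 * (n₂ : ℤ) ^ 2) : ℤ) =
        (f.r ((n₁ : ℤ) ^ 2) : ℤ) *
          ∏ p ∈ n₂.primeFactors, f.hFactor p (n₂.factorization p)

/-- `m_s(f)`: the minimal positive integer whose square is represented by `f`. -/
def msf (f : TernaryQF) : ℕ := sInf {n : ℕ | 0 < n ∧ f.r ((n : ℤ) ^ 2) ≠ 0}

/-- The (rational) Gram matrix of the form. -/
def gram (f : TernaryQF) : Matrix (Fin 3) (Fin 3) ℚ :=
  !![(f.a : ℚ), (f.g : ℚ) / 2, (f.e : ℚ) / 2;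
     (f.g : ℚ) / 2, (f.b : ℚ), (f.d : ℚ) / 2;
     (f.e : ℚ) / 2, (f.d : ℚ) / 2, (f.c : ℚ)]

/-- Equivalence of ternary forms over ℤ. -/
def TEquiv (f g : TernaryQF) : Prop :=
  ∃ U : Matrix (Fin 3) (Fin 3) ℤ, IsUnit U.det ∧
    (U.map ((↑) : ℤ → ℚ)).transpose * f.gram * U.map ((↑) : ℤ → ℚ) = g.gram

/-- The Gram matrix viewed over `ℚ_p`. -/
def gramPadic (p : ℕ) [Fact p.Prime] (f : TernaryQF) : Matrix (Fin 3) (Fin 3) ℚ_[p] :=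
  f.gram.map (fun x : ℚ => (x : ℚ_[p]))

/-- The coercion `ℤ_p → ℚ_p`. -/
def coeQp {p : ℕ} [Fact p.Prime] (x : ℤ_[p]) : ℚ_[p] := x

/-- Two matrices over `ℚ_p` are equivalent over `ℤ_p` if `Uᵀ A U = B` for some
`U ∈ GL₃(ℤ_p)`. -/
def EquivZp (p : ℕ) [Fact p.Prime] (A B : Matrix (Fin 3) (Fin 3) ℚ_[p]) : Prop :=
  ∃ U : Matrix (Fin 3) (Fin 3) ℤ_[p], IsUnit U.det ∧
    (U.map coeQp).transpose * A * U.map coeQp = B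

/-- Two forms lie in the same genus: locally equivalent at every (finite) prime. -/
def SameGenus (f g : TernaryQF) : Prop :=
  ∀ (p : ℕ) [Fact p.Prime], EquivZp p (gramPadic p f) (gramPadic p g)

/-- `Λ_p(f) = {v ∈ ℤ³ : f(v+z) ≡ f(z) (mod p) for all z ∈ ℤ³}`. -/
def Lam (p : ℕ) (f : TernaryQF) : Set (Fin 3 → ℤ) :=
  {v | ∀ z : Fin 3 → ℤ, (p : ℤ) ∣ (f.evalVec (v + z) - f.evalVec z)}

/-- `g` is a Watson `λ_p`-transform of `f`: `g` is obtained by expressing `f` on a basis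
of `Λ_p(f)` and dividing by the largest power of `p` dividing all values. -/
def IsWatson (p : ℕ) (f g : TernaryQF) : Prop :=
  ∃ (B : Matrix (Fin 3) (Fin 3) ℤ) (k : ℕ),
    Set.range B.mulVec = Lam p f ∧
    (∀ v : Fin 3 → ℤ, f.evalVec (B.mulVec v) = (p : ℤ) ^ k * g.evalVec v) ∧
    ¬ ∀ v : Fin 3 → ℤ, (p : ℤ) ∣ g.evalVec v

/-- The order of the (finite, for positive definite forms) integral isometry group. -/
def autCount (f : TernaryQF) : ℕ :=
  Set.ncard {U : Matrix (Fin 3) (Fin 3) ℤ | IsUnit U.det ∧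
    (U.map ((↑) : ℤ → ℚ)).transpose * f.gram * U.map ((↑) : ℤ → ℚ) = f.gram}

end TernaryQF

open TernaryQF

section Aux17

private lemma eval_mk17 (a b c d e g : ℤ) (v : Fin 3 → ℤ) :
    (TernaryQF.mk a b c d e g).evalVec v =
      a * v 0 ^ 2 + b * v 1 ^ 2 + c * v 2 ^ 2 + d * (v 1 * v 2) +
        e * (v 2 * v 0) + g * (v 0 * v 1) := by
  simp [TernaryQF.evalVec, TernaryQF.eval, TernaryQF.evalR]

private lemma ncard_split3' {α : Type*} {S A B C : Set α} (hfin : S.Finite)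
    (hS : S = A ∪ B ∪ C) (hAB : Disjoint A B) (hAC : Disjoint A C) (hBC : Disjoint B C) :
    S.ncard = A.ncard + B.ncard + C.ncard := by
  have hA : A.Finite := hfin.subset (by rw [hS]; exact Set.subset_union_left.trans Set.subset_union_left)
  have hB : B.Finite := hfin.subset (by rw [hS]; exact Set.subset_union_right.trans Set.subset_union_left)
  have hC : C.Finite := hfin.subset (by rw [hS]; exact Set.subset_union_right)
  rw [hS, Set.ncard_union_eq (Set.disjoint_union_left.mpr ⟨hAC, hBC⟩) (hA.union hB) hC,
    Set.ncard_union_eq hAB hA hB]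

private lemma image_cond17 {α : Type*} (S : Set α) (P Q : α → Prop) (φ ψ : α → α)
    (hφψ : ∀ v, φ (ψ v) = v)
    (hSP : ∀ v, v ∈ S ∧ P v → φ v ∈ S ∧ Q (φ v))
    (hSQ : ∀ v, v ∈ S ∧ Q v → ψ v ∈ S ∧ P (ψ v)) :
    φ '' {v | v ∈ S ∧ P v} = {v | v ∈ S ∧ Q v} := by
  ext w
  simp only [Set.mem_image, Set.mem_setOf_eq]
  constructor
  · rintro ⟨v, hv, rfl⟩; exact hSP v hv
  · intro hw; exact ⟨ψ w, hSQ w hw, hφψ w⟩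

private lemma image_rep17 {α : Type*} (S : Set α) (T : Set α) (P : α → Prop) (φ : α → α)
    (h1 : ∀ v, v ∈ T ↔ φ v ∈ S)
    (hP : ∀ v, P (φ v))
    (hsurj : ∀ w, P w → ∃ v, φ v = w) :
    φ '' T = {v | v ∈ S ∧ P v} := by
  ext w
  simp only [Set.mem_image, Set.mem_setOf_eq]
  constructor
  · rintro ⟨v, hv, rfl⟩; exact ⟨(h1 v).mp hv, hP v⟩
  · rintro ⟨hw, hPw⟩
    obtain ⟨v, rfl⟩ := hsurj w hPw
    exact ⟨v, (h1 v).mpr hw, rfl⟩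

private lemma zc1 : ∀ x y : ZMod 3, x^2 + x*y + y^2 = 1 →
    (y = 0 ∨ x = 0 ∨ x + y = 0) ∧ ¬(y = 0 ∧ x = 0) ∧ ¬(y = 0 ∧ x + y = 0) ∧
      ¬(x = 0 ∧ x + y = 0) := by decide

private lemma zc2 : ∀ x y z : ZMod 3, x^2 + x*y + y^2 = 1 →
    (y - z = 0 ∨ x + y + z = 0 ∨ x - z = 0) ∧ ¬(y - z = 0 ∧ x + y + z = 0) ∧
      ¬(y - z = 0 ∧ x - z = 0) ∧ ¬(x + y + z = 0 ∧ x - z = 0) := by decide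

private lemma zc3 : ∀ x y z : ZMod 3, x^2 + x*y + y^2 = 1 →
    (z = 0 ∨ x - y - z = 0 ∨ x - y + z = 0) ∧ ¬(z = 0 ∧ x - y - z = 0) ∧
      ¬(z = 0 ∧ x - y + z = 0) ∧ ¬(x - y - z = 0 ∧ x - y + z = 0) := by decide

private lemma cast_key17 (s m : ℤ) (hm : (m : ZMod 3) = 1) (v : Fin 3 → ℤ)
    (hv : (TernaryQF.mk 1 1 (3*s) 0 0 1).evalVec v = m) :
    ((v 0 : ZMod 3))^2 + (v 0 : ZMod 3) * (v 1 : ZMod 3) + ((v 1 : ZMod 3))^2 = 1 := by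
  rw [eval_mk17] at hv
  have h := congrArg (fun a : ℤ => (a : ZMod 3)) hv
  push_cast at h
  rw [hm] at h
  have h3 : (3 : ZMod 3) = 0 := by decide
  rw [h3] at h
  linear_combination h

private lemma dvd_iff17 (a : ℤ) : (3:ℤ) ∣ a ↔ ((a : ZMod 3) = 0) :=
  (ZMod.intCast_zmod_eq_zero_iff_dvd a 3).symm

private lemma key1' (s m : ℤ) (hm : (m : ZMod 3) = 1) (v : Fin 3 → ℤ)
    (hv : (TernaryQF.mk 1 1 (3*s) 0 0 1).evalVec v = m) :
    ((3:ℤ) ∣ v 1 ∨ (3:ℤ) ∣ v 0 ∨ (3:ℤ) ∣ (v 0 + v 1)) ∧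
      ¬((3:ℤ) ∣ v 1 ∧ (3:ℤ) ∣ v 0) ∧ ¬((3:ℤ) ∣ v 1 ∧ (3:ℤ) ∣ (v 0 + v 1)) ∧
      ¬((3:ℤ) ∣ v 0 ∧ (3:ℤ) ∣ (v 0 + v 1)) := by
  have h := cast_key17 s m hm v hv
  simp only [dvd_iff17]
  push_cast
  exact zc1 _ _ h

private lemma key2' (s m : ℤ) (hm : (m : ZMod 3) = 1) (v : Fin 3 → ℤ)
    (hv : (TernaryQF.mk 1 1 (3*s) 0 0 1).evalVec v = m) :
    ((3:ℤ) ∣ (v 1 - v 2) ∨ (3:ℤ) ∣ (v 0 + v 1 + v 2) ∨ (3:ℤ) ∣ (v 0 - v 2)) ∧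
      ¬((3:ℤ) ∣ (v 1 - v 2) ∧ (3:ℤ) ∣ (v 0 + v 1 + v 2)) ∧
      ¬((3:ℤ) ∣ (v 1 - v 2) ∧ (3:ℤ) ∣ (v 0 - v 2)) ∧
      ¬((3:ℤ) ∣ (v 0 + v 1 + v 2) ∧ (3:ℤ) ∣ (v 0 - v 2)) := by
  have h := cast_key17 s m hm v hv
  simp only [dvd_iff17]
  push_cast
  exact zc2 _ _ _ h

private lemma key3' (s m : ℤ) (hm : (m : ZMod 3) = 1) (v : Fin 3 → ℤ)
    (hv : (TernaryQF.mk 1 1 (3*s) 0 0 1).evalVec v = m) :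
    ((3:ℤ) ∣ v 2 ∨ (3:ℤ) ∣ (v 0 - v 1 - v 2) ∨ (3:ℤ) ∣ (v 0 - v 1 + v 2)) ∧
      ¬((3:ℤ) ∣ v 2 ∧ (3:ℤ) ∣ (v 0 - v 1 - v 2)) ∧
      ¬((3:ℤ) ∣ v 2 ∧ (3:ℤ) ∣ (v 0 - v 1 + v 2)) ∧
      ¬((3:ℤ) ∣ (v 0 - v 1 - v 2) ∧ (3:ℤ) ∣ (v 0 - v 1 + v 2)) := by
  have h := cast_key17 s m hm v hv
  simp only [dvd_iff17]
  push_cast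
  exact zc3 _ _ _ h

private lemma S_fin17 (s m : ℤ) (hs : 1 ≤ s) (hm : 2 ≤ m) :
    {v : Fin 3 → ℤ | (TernaryQF.mk 1 1 (3*s) 0 0 1).evalVec v = m}.Finite := by
  apply Set.Finite.subset (Set.finite_Icc (fun _ : Fin 3 => -m) (fun _ => m))
  intro v hv
  rw [Set.mem_setOf_eq, eval_mk17] at hv
  have hz2 : (0:ℤ) ≤ (s - 1) * (v 2)^2 := mul_nonneg (by linarith) (sq_nonneg _)
  have b0 : -m ≤ v 0 ∧ v 0 ≤ m := by
    constructor <;> nlinarith [sq_nonneg (v 0 + v 1), sq_nonneg (v 1), sq_nonneg (v 2),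
      sq_nonneg (v 0 + m), sq_nonneg (v 0 - m)]
  have b1 : -m ≤ v 1 ∧ v 1 ≤ m := by
    constructor <;> nlinarith [sq_nonneg (v 0 + v 1), sq_nonneg (v 0), sq_nonneg (v 2),
      sq_nonneg (v 1 + m), sq_nonneg (v 1 - m)]
  have b2 : -m ≤ v 2 ∧ v 2 ≤ m := by
    constructor <;> nlinarith [sq_nonneg (2 * v 0 + v 1), sq_nonneg (v 1),
      sq_nonneg (v 2 + m), sq_nonneg (v 2 - m), sq_nonneg (v 2)]
  rw [Set.mem_Icc]
  constructor <;> intro i <;> fin_cases i <;> simp <;> omega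

private lemma part1' (s m : ℤ) (hm : (m : ZMod 3) = 1)
    (hfin : {v : Fin 3 → ℤ | (TernaryQF.mk 1 1 (3*s) 0 0 1).evalVec v = m}.Finite) :
    (TernaryQF.mk 1 1 (3*s) 0 0 1).r m = 3 * (TernaryQF.mk 1 7 (3*s) 0 0 1).r m := by
  set S : Set (Fin 3 → ℤ) := {v | (TernaryQF.mk 1 1 (3*s) 0 0 1).evalVec v = m} with hSdef
  set A0 : Set (Fin 3 → ℤ) := {v | v ∈ S ∧ (3:ℤ) ∣ v 1} with hA0def
  set A1 : Set (Fin 3 → ℤ) := {v | v ∈ S ∧ (3:ℤ) ∣ v 0} with hA1def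
  set A2 : Set (Fin 3 → ℤ) := {v | v ∈ S ∧ (3:ℤ) ∣ (v 0 + v 1)} with hA2def
  have hmemS : ∀ v, v ∈ S ↔ (TernaryQF.mk 1 1 (3*s) 0 0 1).evalVec v = m := fun v => Iff.rfl
  -- coverage
  have hcov : S = A0 ∪ A1 ∪ A2 := by
    ext v
    simp only [hA0def, hA1def, hA2def, Set.mem_union, Set.mem_setOf_eq]
    constructor
    · intro hv
      have k := (key1' s m hm v hv).1
      tauto
    · tauto
  have hd01 : Disjoint A0 A1 := by
    rw [Set.disjoint_left]
    rintro v ⟨hv, h⟩ ⟨_, h'⟩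
    exact (key1' s m hm v hv).2.1 ⟨h, h'⟩
  have hd02 : Disjoint A0 A2 := by
    rw [Set.disjoint_left]
    rintro v ⟨hv, h⟩ ⟨_, h'⟩
    exact (key1' s m hm v hv).2.2.1 ⟨h, h'⟩
  have hd12 : Disjoint A1 A2 := by
    rw [Set.disjoint_left]
    rintro v ⟨hv, h⟩ ⟨_, h'⟩
    exact (key1' s m hm v hv).2.2.2 ⟨h, h'⟩
  -- the rotation
  have hωS : ∀ v : Fin 3 → ℤ, v ∈ S → (![-(v 1), v 0 + v 1, v 2] : Fin 3 → ℤ) ∈ S := by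
    intro v hv
    rw [hmemS, eval_mk17] at hv ⊢
    simp only [Matrix.cons_val_zero, Matrix.cons_val_one, Matrix.head_cons,
      Matrix.cons_val_two, Matrix.tail_cons]
    linear_combination hv
  have hωinvS : ∀ v : Fin 3 → ℤ, v ∈ S → (![v 0 + v 1, -(v 0), v 2] : Fin 3 → ℤ) ∈ S := by
    intro v hv
    rw [hmemS, eval_mk17] at hv ⊢
    simp only [Matrix.cons_val_zero, Matrix.cons_val_one, Matrix.head_cons,
      Matrix.cons_val_two, Matrix.tail_cons]
    linear_combination hv
  have hinv : ∀ v : Fin 3 → ℤ,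
      (fun w : Fin 3 → ℤ => (![-(w 1), w 0 + w 1, w 2] : Fin 3 → ℤ))
        ((fun w : Fin 3 → ℤ => (![w 0 + w 1, -(w 0), w 2] : Fin 3 → ℤ)) v) = v := by
    intro v
    funext i
    fin_cases i <;> simp <;> ring
  have hωinj : Function.Injective
      (fun w : Fin 3 → ℤ => (![-(w 1), w 0 + w 1, w 2] : Fin 3 → ℤ)) := by
    intro a b h
    have h0 := congrFun h 0
    have h1 := congrFun h 1
    have h2 := congrFun h 2
    simp only [Matrix.cons_val_zero, Matrix.cons_val_one, Matrix.head_cons,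
      Matrix.cons_val_two, Matrix.tail_cons] at h0 h1 h2
    funext i
    fin_cases i <;> simp <;> omega
  have i1 : (fun w : Fin 3 → ℤ => (![-(w 1), w 0 + w 1, w 2] : Fin 3 → ℤ)) '' A0 = A1 := by
    rw [hA0def, hA1def]
    apply image_cond17 S _ _ _ (fun w : Fin 3 → ℤ => (![w 0 + w 1, -(w 0), w 2] : Fin 3 → ℤ)) hinv
    · rintro v ⟨hv, hP⟩
      refine ⟨hωS v hv, ?_⟩
      simp only [Matrix.cons_val_zero]
      omega
    · rintro v ⟨hv, hQ⟩
      refine ⟨hωinvS v hv, ?_⟩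
      simp only [Matrix.cons_val_zero, Matrix.cons_val_one, Matrix.head_cons]
      omega
  have i2 : (fun w : Fin 3 → ℤ => (![-(w 1), w 0 + w 1, w 2] : Fin 3 → ℤ)) '' A1 = A2 := by
    rw [hA1def, hA2def]
    apply image_cond17 S _ _ _ (fun w : Fin 3 → ℤ => (![w 0 + w 1, -(w 0), w 2] : Fin 3 → ℤ)) hinv
    · rintro v ⟨hv, hP⟩
      refine ⟨hωS v hv, ?_⟩
      simp only [Matrix.cons_val_zero, Matrix.cons_val_one, Matrix.head_cons]
      omega
    · rintro v ⟨hv, hQ⟩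
      refine ⟨hωinvS v hv, ?_⟩
      simp only [Matrix.cons_val_zero, Matrix.cons_val_one, Matrix.head_cons]
      omega
  have c1 : A1.ncard = A0.ncard := by
    rw [← i1, Set.ncard_image_of_injective _ hωinj]
  have c2 : A2.ncard = A0.ncard := by
    rw [← i2, Set.ncard_image_of_injective _ hωinj, c1]
  -- identify A0 with representations by L
  have hLinj : Function.Injective
      (fun w : Fin 3 → ℤ => (![w 0 - w 1, 3 * w 1, w 2] : Fin 3 → ℤ)) := by
    intro a b h
    have h0 := congrFun h 0
    have h1 := congrFun h 1
    have h2 := congrFun h 2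
    simp only [Matrix.cons_val_zero, Matrix.cons_val_one, Matrix.head_cons,
      Matrix.cons_val_two, Matrix.tail_cons] at h0 h1 h2
    funext i
    fin_cases i <;> simp <;> omega
  have him : (fun w : Fin 3 → ℤ => (![w 0 - w 1, 3 * w 1, w 2] : Fin 3 → ℤ)) ''
      {v : Fin 3 → ℤ | (TernaryQF.mk 1 7 (3*s) 0 0 1).evalVec v = m} = A0 := by
    rw [hA0def]
    apply image_rep17
    · intro v
      rw [Set.mem_setOf_eq, hmemS, eval_mk17, eval_mk17]
      simp only [Matrix.cons_val_zero, Matrix.cons_val_one, Matrix.head_cons,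
        Matrix.cons_val_two, Matrix.tail_cons]
      constructor <;> intro h <;> linear_combination h
    · intro v
      simp only [Matrix.cons_val_one, Matrix.head_cons]
      exact ⟨v 1, rfl⟩
    · intro w hw
      obtain ⟨k, hk⟩ := hw
      refine ⟨![w 0 + k, k, w 2], ?_⟩
      funext i
      fin_cases i <;> simp <;> omega
  have hA0 : (TernaryQF.mk 1 7 (3*s) 0 0 1).r m = A0.ncard := by
    rw [TernaryQF.r, ← him, Set.ncard_image_of_injective _ hLinj]
  have hcount := ncard_split3' hfin hcov hd01 hd02 hd12
  show S.ncard = 3 * (TernaryQF.mk 1 7 (3*s) 0 0 1).r m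
  rw [hA0, hcount, c1, c2]
  ring

private lemma part2' (s m : ℤ) (hm : (m : ZMod 3) = 1)
    (hfin : {v : Fin 3 → ℤ | (TernaryQF.mk 1 1 (3*s) 0 0 1).evalVec v = m}.Finite) :
    (TernaryQF.mk 1 1 (3*s) 0 0 1).r m = 3 * (TernaryQF.mk 1 7 (3*s+1) 5 1 1).r m := by
  set S : Set (Fin 3 → ℤ) := {v | (TernaryQF.mk 1 1 (3*s) 0 0 1).evalVec v = m} with hSdef
  set A0 : Set (Fin 3 → ℤ) := {v | v ∈ S ∧ (3:ℤ) ∣ (v 1 - v 2)} with hA0def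
  set A1 : Set (Fin 3 → ℤ) := {v | v ∈ S ∧ (3:ℤ) ∣ (v 0 + v 1 + v 2)} with hA1def
  set A2 : Set (Fin 3 → ℤ) := {v | v ∈ S ∧ (3:ℤ) ∣ (v 0 - v 2)} with hA2def
  have hmemS : ∀ v, v ∈ S ↔ (TernaryQF.mk 1 1 (3*s) 0 0 1).evalVec v = m := fun v => Iff.rfl
  have hcov : S = A0 ∪ A1 ∪ A2 := by
    ext v
    simp only [hA0def, hA1def, hA2def, Set.mem_union, Set.mem_setOf_eq]
    constructor
    · intro hv
      have k := (key2' s m hm v hv).1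
      tauto
    · tauto
  have hd01 : Disjoint A0 A1 := by
    rw [Set.disjoint_left]
    rintro v ⟨hv, h⟩ ⟨_, h'⟩
    exact (key2' s m hm v hv).2.1 ⟨h, h'⟩
  have hd02 : Disjoint A0 A2 := by
    rw [Set.disjoint_left]
    rintro v ⟨hv, h⟩ ⟨_, h'⟩
    exact (key2' s m hm v hv).2.2.1 ⟨h, h'⟩
  have hd12 : Disjoint A1 A2 := by
    rw [Set.disjoint_left]
    rintro v ⟨hv, h⟩ ⟨_, h'⟩
    exact (key2' s m hm v hv).2.2.2 ⟨h, h'⟩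
  have hρS : ∀ v : Fin 3 → ℤ, v ∈ S → (![-(v 0) - v 1, v 0, v 2] : Fin 3 → ℤ) ∈ S := by
    intro v hv
    rw [hmemS, eval_mk17] at hv ⊢
    simp only [Matrix.cons_val_zero, Matrix.cons_val_one, Matrix.head_cons,
      Matrix.cons_val_two, Matrix.tail_cons]
    linear_combination hv
  have hρinvS : ∀ v : Fin 3 → ℤ, v ∈ S → (![v 1, -(v 0) - v 1, v 2] : Fin 3 → ℤ) ∈ S := by
    intro v hv
    rw [hmemS, eval_mk17] at hv ⊢
    simp only [Matrix.cons_val_zero, Matrix.cons_val_one, Matrix.head_cons,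
      Matrix.cons_val_two, Matrix.tail_cons]
    linear_combination hv
  have hinv : ∀ v : Fin 3 → ℤ,
      (fun w : Fin 3 → ℤ => (![-(w 0) - w 1, w 0, w 2] : Fin 3 → ℤ))
        ((fun w : Fin 3 → ℤ => (![w 1, -(w 0) - w 1, w 2] : Fin 3 → ℤ)) v) = v := by
    intro v
    funext i
    fin_cases i <;> simp <;> ring
  have hρinj : Function.Injective
      (fun w : Fin 3 → ℤ => (![-(w 0) - w 1, w 0, w 2] : Fin 3 → ℤ)) := by
    intro a b h
    have h0 := congrFun h 0
    have h1 := congrFun h 1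
    have h2 := congrFun h 2
    simp only [Matrix.cons_val_zero, Matrix.cons_val_one, Matrix.head_cons,
      Matrix.cons_val_two, Matrix.tail_cons] at h0 h1 h2
    funext i
    fin_cases i <;> simp <;> omega
  have i1 : (fun w : Fin 3 → ℤ => (![-(w 0) - w 1, w 0, w 2] : Fin 3 → ℤ)) '' A0 = A1 := by
    rw [hA0def, hA1def]
    apply image_cond17 S _ _ _ (fun w : Fin 3 → ℤ => (![w 1, -(w 0) - w 1, w 2] : Fin 3 → ℤ)) hinv
    · rintro v ⟨hv, hP⟩
      refine ⟨hρS v hv, ?_⟩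
      simp only [Matrix.cons_val_zero, Matrix.cons_val_one, Matrix.head_cons,
        Matrix.cons_val_two, Matrix.tail_cons]
      omega
    · rintro v ⟨hv, hQ⟩
      refine ⟨hρinvS v hv, ?_⟩
      simp only [Matrix.cons_val_zero, Matrix.cons_val_one, Matrix.head_cons,
        Matrix.cons_val_two, Matrix.tail_cons]
      omega
  have i2 : (fun w : Fin 3 → ℤ => (![-(w 0) - w 1, w 0, w 2] : Fin 3 → ℤ)) '' A1 = A2 := by
    rw [hA1def, hA2def]
    apply image_cond17 S _ _ _ (fun w : Fin 3 → ℤ => (![w 1, -(w 0) - w 1, w 2] : Fin 3 → ℤ)) hinv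
    · rintro v ⟨hv, hP⟩
      refine ⟨hρS v hv, ?_⟩
      simp only [Matrix.cons_val_zero, Matrix.cons_val_one, Matrix.head_cons,
        Matrix.cons_val_two, Matrix.tail_cons]
      omega
    · rintro v ⟨hv, hQ⟩
      refine ⟨hρinvS v hv, ?_⟩
      simp only [Matrix.cons_val_zero, Matrix.cons_val_one, Matrix.head_cons,
        Matrix.cons_val_two, Matrix.tail_cons]
      omega
  have c1 : A1.ncard = A0.ncard := by
    rw [← i1, Set.ncard_image_of_injective _ hρinj]
  have c2 : A2.ncard = A0.ncard := by
    rw [← i2, Set.ncard_image_of_injective _ hρinj, c1]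
  have hMinj : Function.Injective
      (fun w : Fin 3 → ℤ => (![-(w 0) - 2 * w 1 - w 2, 3 * w 1 + w 2, w 2] : Fin 3 → ℤ)) := by
    intro a b h
    have h0 := congrFun h 0
    have h1 := congrFun h 1
    have h2 := congrFun h 2
    simp only [Matrix.cons_val_zero, Matrix.cons_val_one, Matrix.head_cons,
      Matrix.cons_val_two, Matrix.tail_cons] at h0 h1 h2
    funext i
    fin_cases i <;> simp <;> omega
  have him : (fun w : Fin 3 → ℤ => (![-(w 0) - 2 * w 1 - w 2, 3 * w 1 + w 2, w 2] : Fin 3 → ℤ)) ''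
      {v : Fin 3 → ℤ | (TernaryQF.mk 1 7 (3*s+1) 5 1 1).evalVec v = m} = A0 := by
    rw [hA0def]
    apply image_rep17
    · intro v
      rw [Set.mem_setOf_eq, hmemS, eval_mk17, eval_mk17]
      simp only [Matrix.cons_val_zero, Matrix.cons_val_one, Matrix.head_cons,
        Matrix.cons_val_two, Matrix.tail_cons]
      constructor <;> intro h <;> linear_combination h
    · intro v
      simp only [Matrix.cons_val_zero, Matrix.cons_val_one, Matrix.head_cons, Matrix.cons_val_two, Matrix.tail_cons]
      exact ⟨v 1, by ring⟩
    · intro w hw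
      obtain ⟨k, hk⟩ := hw
      refine ⟨![-(w 0) - 2 * k - w 2, k, w 2], ?_⟩
      funext i
      fin_cases i <;> simp <;> omega
  have hA0 : (TernaryQF.mk 1 7 (3*s+1) 5 1 1).r m = A0.ncard := by
    rw [TernaryQF.r, ← him, Set.ncard_image_of_injective _ hMinj]
  have hcount := ncard_split3' hfin hcov hd01 hd02 hd12
  show S.ncard = 3 * (TernaryQF.mk 1 7 (3*s+1) 5 1 1).r m
  rw [hA0, hcount, c1, c2]
  ring

private lemma part3' (s m : ℤ) (hm : (m : ZMod 3) = 1)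
    (hfin : {v : Fin 3 → ℤ | (TernaryQF.mk 1 1 (3*s) 0 0 1).evalVec v = m}.Finite) :
    (TernaryQF.mk 1 1 (3*s) 0 0 1).r m =
      2 * (TernaryQF.mk 3 3 (3*s+1) 3 0 3).r m + (TernaryQF.mk 1 1 (27*s) 0 0 1).r m := by
  set S : Set (Fin 3 → ℤ) := {v | (TernaryQF.mk 1 1 (3*s) 0 0 1).evalVec v = m} with hSdef
  set A0 : Set (Fin 3 → ℤ) := {v | v ∈ S ∧ (3:ℤ) ∣ v 2} with hA0def
  set A1 : Set (Fin 3 → ℤ) := {v | v ∈ S ∧ (3:ℤ) ∣ (v 0 - v 1 - v 2)} with hA1def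
  set A2 : Set (Fin 3 → ℤ) := {v | v ∈ S ∧ (3:ℤ) ∣ (v 0 - v 1 + v 2)} with hA2def
  have hmemS : ∀ v, v ∈ S ↔ (TernaryQF.mk 1 1 (3*s) 0 0 1).evalVec v = m := fun v => Iff.rfl
  have hcov : S = A0 ∪ A1 ∪ A2 := by
    ext v
    simp only [hA0def, hA1def, hA2def, Set.mem_union, Set.mem_setOf_eq]
    constructor
    · intro hv
      have k := (key3' s m hm v hv).1
      tauto
    · tauto
  have hd01 : Disjoint A0 A1 := by
    rw [Set.disjoint_left]
    rintro v ⟨hv, h⟩ ⟨_, h'⟩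
    exact (key3' s m hm v hv).2.1 ⟨h, h'⟩
  have hd02 : Disjoint A0 A2 := by
    rw [Set.disjoint_left]
    rintro v ⟨hv, h⟩ ⟨_, h'⟩
    exact (key3' s m hm v hv).2.2.1 ⟨h, h'⟩
  have hd12 : Disjoint A1 A2 := by
    rw [Set.disjoint_left]
    rintro v ⟨hv, h⟩ ⟨_, h'⟩
    exact (key3' s m hm v hv).2.2.2 ⟨h, h'⟩
  have hνS : ∀ v : Fin 3 → ℤ, v ∈ S → (![v 0, v 1, -(v 2)] : Fin 3 → ℤ) ∈ S := by
    intro v hv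
    rw [hmemS, eval_mk17] at hv ⊢
    simp only [Matrix.cons_val_zero, Matrix.cons_val_one, Matrix.head_cons,
      Matrix.cons_val_two, Matrix.tail_cons]
    linear_combination hv
  have hinv : ∀ v : Fin 3 → ℤ,
      (fun w : Fin 3 → ℤ => (![w 0, w 1, -(w 2)] : Fin 3 → ℤ))
        ((fun w : Fin 3 → ℤ => (![w 0, w 1, -(w 2)] : Fin 3 → ℤ)) v) = v := by
    intro v
    funext i
    fin_cases i <;> simp
  have hνinj : Function.Injective
      (fun w : Fin 3 → ℤ => (![w 0, w 1, -(w 2)] : Fin 3 → ℤ)) := by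
    intro a b h
    have h0 := congrFun h 0
    have h1 := congrFun h 1
    have h2 := congrFun h 2
    simp only [Matrix.cons_val_zero, Matrix.cons_val_one, Matrix.head_cons,
      Matrix.cons_val_two, Matrix.tail_cons] at h0 h1 h2
    funext i
    fin_cases i <;> simp <;> omega
  have i2 : (fun w : Fin 3 → ℤ => (![w 0, w 1, -(w 2)] : Fin 3 → ℤ)) '' A1 = A2 := by
    rw [hA1def, hA2def]
    apply image_cond17 S _ _ _ (fun w : Fin 3 → ℤ => (![w 0, w 1, -(w 2)] : Fin 3 → ℤ)) hinv
    · rintro v ⟨hv, hP⟩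
      refine ⟨hνS v hv, ?_⟩
      simp only [Matrix.cons_val_zero, Matrix.cons_val_one, Matrix.head_cons,
        Matrix.cons_val_two, Matrix.tail_cons]
      omega
    · rintro v ⟨hv, hQ⟩
      refine ⟨hνS v hv, ?_⟩
      simp only [Matrix.cons_val_zero, Matrix.cons_val_one, Matrix.head_cons,
        Matrix.cons_val_two, Matrix.tail_cons]
      omega
  have c2 : A2.ncard = A1.ncard := by
    rw [← i2, Set.ncard_image_of_injective _ hνinj]
  -- K form
  have hKinj : Function.Injective
      (fun w : Fin 3 → ℤ => (![w 0, w 1, 3 * w 2] : Fin 3 → ℤ)) := by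
    intro a b h
    have h0 := congrFun h 0
    have h1 := congrFun h 1
    have h2 := congrFun h 2
    simp only [Matrix.cons_val_zero, Matrix.cons_val_one, Matrix.head_cons,
      Matrix.cons_val_two, Matrix.tail_cons] at h0 h1 h2
    funext i
    fin_cases i <;> simp <;> omega
  have himK : (fun w : Fin 3 → ℤ => (![w 0, w 1, 3 * w 2] : Fin 3 → ℤ)) ''
      {v : Fin 3 → ℤ | (TernaryQF.mk 1 1 (27*s) 0 0 1).evalVec v = m} = A0 := by
    rw [hA0def]
    apply image_rep17
    · intro v
      rw [Set.mem_setOf_eq, hmemS, eval_mk17, eval_mk17]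
      simp only [Matrix.cons_val_zero, Matrix.cons_val_one, Matrix.head_cons,
        Matrix.cons_val_two, Matrix.tail_cons]
      constructor <;> intro h <;> linear_combination h
    · intro v
      simp only [Matrix.cons_val_two, Matrix.tail_cons, Matrix.head_cons]
      exact ⟨v 2, rfl⟩
    · intro w hw
      obtain ⟨k, hk⟩ := hw
      refine ⟨![w 0, w 1, k], ?_⟩
      funext i
      fin_cases i <;> simp <;> omega
  have hK : (TernaryQF.mk 1 1 (27*s) 0 0 1).r m = A0.ncard := by
    rw [TernaryQF.r, ← himK, Set.ncard_image_of_injective _ hKinj]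
  -- N form
  have hNinj : Function.Injective
      (fun w : Fin 3 → ℤ => (![-2 * w 0 - w 1, w 0 - w 1 - w 2, w 2] : Fin 3 → ℤ)) := by
    intro a b h
    have h0 := congrFun h 0
    have h1 := congrFun h 1
    have h2 := congrFun h 2
    simp only [Matrix.cons_val_zero, Matrix.cons_val_one, Matrix.head_cons,
      Matrix.cons_val_two, Matrix.tail_cons] at h0 h1 h2
    funext i
    fin_cases i <;> simp <;> omega
  have himN : (fun w : Fin 3 → ℤ => (![-2 * w 0 - w 1, w 0 - w 1 - w 2, w 2] : Fin 3 → ℤ)) ''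
      {v : Fin 3 → ℤ | (TernaryQF.mk 3 3 (3*s+1) 3 0 3).evalVec v = m} = A1 := by
    rw [hA1def]
    apply image_rep17
    · intro v
      rw [Set.mem_setOf_eq, hmemS, eval_mk17, eval_mk17]
      simp only [Matrix.cons_val_zero, Matrix.cons_val_one, Matrix.head_cons,
        Matrix.cons_val_two, Matrix.tail_cons]
      constructor <;> intro h <;> linear_combination h
    · intro v
      simp only [Matrix.cons_val_zero, Matrix.cons_val_one, Matrix.head_cons,
        Matrix.cons_val_two, Matrix.tail_cons]
      exact ⟨-(v 0), by ring⟩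
    · intro w hw
      obtain ⟨k, hk⟩ := hw
      refine ⟨![-k, -(w 0) + 2 * k, w 2], ?_⟩
      funext i
      fin_cases i <;> simp <;> omega
  have hN : (TernaryQF.mk 3 3 (3*s+1) 3 0 3).r m = A1.ncard := by
    rw [TernaryQF.r, ← himN, Set.ncard_image_of_injective _ hNinj]
  have hcount := ncard_split3' hfin hcov hd01 hd02 hd12
  show S.ncard = 2 * (TernaryQF.mk 3 3 (3*s+1) 3 0 3).r m + (TernaryQF.mk 1 1 (27*s) 0 0 1).r m
  rw [hN, hK, hcount, c2]
  ring

end Aux17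

/-- `r(3n+1, ℓ_t) = 3r(3n+1, L_t) = 3r(3n+1, M_t) = 2r(3n+1, N_t) + r(3n+1, K_t)`. -/
theorem stmt17 (t : ℕ) (ht : 0 < t) (n : ℕ) (hn : 0 < n) :
    (TernaryQF.mk 1 1 (3 * t) 0 0 1).r (3 * (n : ℤ) + 1) =
        3 * (TernaryQF.mk 1 7 (3 * t) 0 0 1).r (3 * (n : ℤ) + 1) ∧
    (TernaryQF.mk 1 1 (3 * t) 0 0 1).r (3 * (n : ℤ) + 1) =
        3 * (TernaryQF.mk 1 7 (3 * t + 1) 5 1 1).r (3 * (n : ℤ) + 1) ∧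
    (TernaryQF.mk 1 1 (3 * t) 0 0 1).r (3 * (n : ℤ) + 1) =
        2 * (TernaryQF.mk 3 3 (3 * t + 1) 3 0 3).r (3 * (n : ℤ) + 1) +
          (TernaryQF.mk 1 1 (27 * t) 0 0 1).r (3 * (n : ℤ) + 1) := by
  have hm : (((3 * (n : ℤ) + 1 : ℤ)) : ZMod 3) = 1 := by
    push_cast
    rw [show ((3 : ZMod 3)) = 0 by decide]
    ring
  have hfin := S_fin17 (t : ℤ) (3 * (n : ℤ) + 1) (by exact_mod_cast ht) (by omega)
  exact ⟨part1' (t : ℤ) _ hm hfin, part2' (t : ℤ) _ hm hfin, part3' (t : ℤ) _ hm hfin⟩
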